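/- Let μ be a centred probability measure on ℝ (μ ≠ δ₀) with distribution function F, b < 0 < b̄, and suppose condition (2.7) fails (m̃_{F(b)}^{F(b̄−)} + γb < 0 with γ = 1 − F(b̄−) + F(b)), and (2.8) holds (m̃_{F(b)}^{F(b̄−)} + γb̄ ≤ 0). Set ξ = F(b). Then the function π ↦ m̃^ξ + m̃_{F(b̄−)}^π − b(ξ + π − F(b̄−)) on [F(b̄−),1) is non-positive at π = F(b̄−) and has strictly positive limit as π → 1; hence there exists π* ∈ [F(b̄−),1) with m̃^ξ + m̃_{F(b̄−)}^{π*} = b(ξ + π* − F(b̄−)). -/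

import Mathlib

open MeasureTheory Set

/-- Distribution function of `μ`. -/
noncomputable def distF (μ : Measure ℝ) (x : ℝ) : ℝ := (μ (Iic x)).toReal

/-- Left limit `F(x-)` of the distribution function. -/
noncomputable def distFm (μ : Measure ℝ) (x : ℝ) : ℝ := (μ (Iio x)).toReal

/-- Quantile function of `μ`. -/
noncomputable def quantile (μ : Measure ℝ) (u : ℝ) : ℝ :=
  sInf {x : ℝ | u ≤ distF μ x}

/-- The sub-probability measure `μ_p^q`, i.e. `μ` restricted to its quantile range `(p,q]`,
realised as the image under the quantile function of Lebesgue measure on `(p,q]`. -/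
noncomputable def qmeas (μ : Measure ℝ) (p q : ℝ) : Measure ℝ :=
  (volume.restrict (Ioc p q)).map (quantile μ)

/-- `m̃_p^q = ∫ x dμ_p^q`. -/
noncomputable def mtil (μ : Measure ℝ) (p q : ℝ) : ℝ :=
  ∫ u in Ioc p q, quantile μ u

/-- The barycentre `m_p^q` of `μ` restricted to the quantile range `(p,q]`. -/
noncomputable def bary (μ : Measure ℝ) (p q : ℝ) : ℝ :=
  if p < q then (q - p)⁻¹ * mtil μ p q else quantile μ q

open Filter Topology

open ProbabilityTheory


section aux
variable (μ : Measure ℝ) [IsProbabilityMeasure μ]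

lemma distF_eq_cdf (x : ℝ) : distF μ x = cdf μ x := (cdf_eq_real μ x).symm

lemma distF_mono : Monotone (distF μ) := by
  intro a b h
  rw [distF_eq_cdf, distF_eq_cdf]
  exact monotone_cdf μ h

lemma distF_le_one (x : ℝ) : distF μ x ≤ 1 := by
  rw [distF_eq_cdf]; exact cdf_le_one μ x

lemma distF_nonneg (x : ℝ) : 0 ≤ distF μ x := ENNReal.toReal_nonneg

variable {μ}

lemma bddBelow_qset {u : ℝ} (hu : 0 < u) : BddBelow {x : ℝ | u ≤ distF μ x} := by
  obtain ⟨x₀, hx₀⟩ := ((tendsto_cdf_atBot μ).eventually_lt_const hu).exists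
  refine ⟨x₀, fun x hx => ?_⟩
  by_contra hlt
  push_neg at hlt
  have : distF μ x ≤ distF μ x₀ := distF_mono μ hlt.le
  rw [distF_eq_cdf μ x₀] at this
  have hxu : u ≤ distF μ x := hx
  linarith

lemma nonempty_qset {u : ℝ} (hu : u < 1) : {x : ℝ | u ≤ distF μ x}.Nonempty := by
  obtain ⟨x, hx⟩ := ((tendsto_cdf_atTop μ).eventually_const_lt hu).exists
  exact ⟨x, by rw [mem_setOf_eq, distF_eq_cdf]; exact hx.le⟩

lemma quantile_le {u x : ℝ} (hu : 0 < u) (hx : u ≤ distF μ x) : quantile μ u ≤ x :=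
  csInf_le (bddBelow_qset hu) hx

lemma le_distF_quantile {u : ℝ} (hu0 : 0 < u) (hu1 : u < 1) :
    u ≤ distF μ (quantile μ u) := by
  set S := {x : ℝ | u ≤ distF μ x} with hS
  set a := sInf S with ha
  have hne : S.Nonempty := nonempty_qset hu1
  have hbdd : BddBelow S := bddBelow_qset hu0
  have hsub : S ⊆ Ici a := fun x hx => csInf_le hbdd hx
  have hclosure : a ∈ closure S := csInf_mem_closure hne hbdd
  have hnebot : (𝓝[S] a).NeBot := mem_closure_iff_nhdsWithin_neBot.mp hclosure
  have hcont : ContinuousWithinAt (cdf μ) (Ici a) a := (cdf μ).right_continuous a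
  have htend : Tendsto (cdf μ) (𝓝[S] a) (𝓝 (cdf μ a)) :=
    hcont.mono_left (nhdsWithin_mono _ hsub)
  have hev : ∀ᶠ x in 𝓝[S] a, u ≤ cdf μ x :=
    eventually_mem_nhdsWithin.mono (fun x hx => by
      rw [← distF_eq_cdf]; exact hx)
  have := ge_of_tendsto htend hev
  rw [distF_eq_cdf]
  exact this

lemma quantile_monotoneOn : MonotoneOn (quantile μ) (Ioo (0:ℝ) 1) := by
  intro u hu v hv huv
  exact csInf_le_csInf (bddBelow_qset hu.1) (nonempty_qset hv.2)
    (fun x hx => le_trans huv hx)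

lemma quantile_eq_zero {u : ℝ} (hu : u ∉ Ioc (0:ℝ) 1) : quantile μ u = 0 := by
  rw [mem_Ioc, not_and_or, not_lt, not_le] at hu
  rcases hu with hu | hu
  · have : ¬ BddBelow {x : ℝ | u ≤ distF μ x} := by
      intro ⟨c, hc⟩
      have h1 : (c - 1) ∈ {x : ℝ | u ≤ distF μ x} := hu.trans (distF_nonneg μ _)
      have := hc h1
      linarith
    exact Real.sInf_of_not_bddBelow this
  · have : {x : ℝ | u ≤ distF μ x} = ∅ := by
      ext x
      simp only [mem_setOf_eq, mem_empty_iff_false, iff_false, not_le]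
      exact lt_of_le_of_lt (distF_le_one μ x) hu
    rw [quantile, this, Real.sInf_empty]

lemma quantile_indicator :
    quantile μ = (Ioc (0:ℝ) 1).indicator (quantile μ) := by
  funext u
  by_cases h : u ∈ Ioc (0:ℝ) 1
  · rw [indicator_of_mem h]
  · rw [indicator_of_notMem h, quantile_eq_zero h]

lemma quantile_aemeasurable :
    AEMeasurable (quantile μ) (volume.restrict (Ioc (0:ℝ) 1)) := by
  rw [Measure.restrict_congr_set (Ioo_ae_eq_Ioc (μ := volume) (a := (0:ℝ)) (b := 1)).symm]
  exact aemeasurable_restrict_of_monotoneOn measurableSet_Ioo quantile_monotoneOn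

lemma quantile_map :
    (volume.restrict (Ioc (0:ℝ) 1)).map (quantile μ) = μ := by
  have hprob : IsProbabilityMeasure ((volume.restrict (Ioc (0:ℝ) 1)).map (quantile μ)) := by
    constructor
    rw [Measure.map_apply_of_aemeasurable quantile_aemeasurable MeasurableSet.univ]
    simp [Real.volume_Ioc]
  refine Measure.ext_of_Iic ((volume.restrict (Ioc (0:ℝ) 1)).map (quantile μ)) μ (fun x => ?_)
  rw [Measure.map_apply_of_aemeasurable quantile_aemeasurable measurableSet_Iic,
    Measure.restrict_apply' measurableSet_Ioc]
  set E := quantile μ ⁻¹' Iic x ∩ Ioc 0 1 with hE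
  have hsub1 : Ioo 0 (distF μ x) ⊆ E := by
    intro u hu
    have hu1 : u < 1 := lt_of_lt_of_le hu.2 (distF_le_one μ x)
    exact ⟨quantile_le hu.1 hu.2.le, hu.1, hu1.le⟩
  have hsub2 : E ⊆ Ioc 0 (distF μ x) ∪ {1} := by
    intro u hu
    rcases eq_or_lt_of_le hu.2.2 with h1 | h1
    · exact Or.inr h1
    · refine Or.inl ⟨hu.2.1, ?_⟩
      have := le_distF_quantile (μ := μ) hu.2.1 h1
      exact this.trans (distF_mono μ hu.1)
  have hle : volume E ≤ ENNReal.ofReal (distF μ x) := by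
    calc volume E ≤ volume (Ioc 0 (distF μ x) ∪ {1}) := measure_mono hsub2
    _ ≤ volume (Ioc 0 (distF μ x)) + volume ({1} : Set ℝ) := measure_union_le _ _
    _ = ENNReal.ofReal (distF μ x) := by simp [Real.volume_Ioc]
  have hge : ENNReal.ofReal (distF μ x) ≤ volume E := by
    calc ENNReal.ofReal (distF μ x) = volume (Ioo 0 (distF μ x)) := by
          simp [Real.volume_Ioo]
    _ ≤ volume E := measure_mono hsub1
  have hvol : volume E = ENNReal.ofReal (distF μ x) := le_antisymm hle hge
  rw [hvol, distF, ENNReal.ofReal_toReal (measure_ne_top μ _)]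

lemma quantile_integrableOn (hint : Integrable id μ) :
    IntegrableOn (quantile μ) (Ioc (0:ℝ) 1) volume := by
  have h := hint
  rw [← quantile_map (μ := μ)] at h
  rwa [integrable_map_measure aestronglyMeasurable_id quantile_aemeasurable] at h

lemma quantile_integrable (hint : Integrable id μ) :
    Integrable (quantile μ) volume := by
  have := (quantile_integrableOn hint).integrable_indicator measurableSet_Ioc
  rwa [← quantile_indicator] at this

lemma quantile_integral_eq (hint : Integrable id μ) :
    ∫ u in Ioc (0:ℝ) 1, quantile μ u = ∫ x, x ∂μ := by
  conv_rhs => rw [← quantile_map (μ := μ)]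
  rw [integral_map (f := fun y : ℝ => y) quantile_aemeasurable aestronglyMeasurable_id]

end aux

theorem stmt12 (μ : Measure ℝ) [IsProbabilityMeasure μ]
    (hint : Integrable id μ) (hcent : ∫ x, x ∂μ = 0)
    (hne : μ ≠ Measure.dirac 0) (lb ub : ℝ) (hlb : lb < 0) (hub : 0 < ub)
    (h27fail : mtil μ (distF μ lb) (distFm μ ub) +
      (1 - distFm μ ub + distF μ lb) * lb < 0)
    (h28 : mtil μ (distF μ lb) (distFm μ ub) +
      (1 - distFm μ ub + distF μ lb) * ub ≤ 0) :
    (mtil μ 0 (distF μ lb) + mtil μ (distFm μ ub) (distFm μ ub) -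
        lb * (distF μ lb + distFm μ ub - distFm μ ub) ≤ 0) ∧
    Tendsto
      (fun π => mtil μ 0 (distF μ lb) + mtil μ (distFm μ ub) π -
        lb * (distF μ lb + π - distFm μ ub))
      (𝓝[<] 1)
      (𝓝 (-(mtil μ (distF μ lb) (distFm μ ub)) -
        (1 - distFm μ ub + distF μ lb) * lb)) ∧
    0 < -(mtil μ (distF μ lb) (distFm μ ub)) -
        (1 - distFm μ ub + distF μ lb) * lb ∧
    ∃ π ∈ Ico (distFm μ ub) 1,
      mtil μ 0 (distF μ lb) + mtil μ (distFm μ ub) π =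
        lb * (distF μ lb + π - distFm μ ub) := by
  classical
  set ξ := distF μ lb with hξdef
  set q := distFm μ ub with hqdef
  have hξ0 : 0 ≤ ξ := ENNReal.toReal_nonneg
  have hq1 : q ≤ 1 := by
    rw [hqdef, distFm]
    calc (μ (Iio ub)).toReal ≤ (μ univ).toReal :=
          ENNReal.toReal_mono (measure_ne_top μ _) (measure_mono (subset_univ _))
    _ = 1 := by simp
  have hξq : ξ ≤ q := by
    rw [hξdef, hqdef, distF, distFm]
    exact ENNReal.toReal_mono (measure_ne_top μ _)
      (measure_mono (fun x hx => lt_of_le_of_lt hx (hlb.trans hub)))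
  have hglob : Integrable (quantile μ) volume := quantile_integrable hint
  have hii : ∀ a b : ℝ, IntervalIntegrable (quantile μ) volume a b :=
    fun a b => hglob.intervalIntegrable
  set G : ℝ → ℝ := fun π => ∫ u in (0:ℝ)..π, quantile μ u with hGdef
  have hGcont : Continuous G := hglob.continuous_primitive 0
  have hmtil : ∀ p r : ℝ, p ≤ r → mtil μ p r = G r - G p := by
    intro p r hpr
    rw [mtil, ← intervalIntegral.integral_of_le hpr, hGdef]
    exact (intervalIntegral.integral_interval_sub_left (hii 0 r) (hii 0 p)).symm
  have hG0 : G 0 = 0 := intervalIntegral.integral_same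
  have hG1 : G 1 = 0 := by
    rw [hGdef]
    simp only
    rw [intervalIntegral.integral_of_le zero_le_one, quantile_integral_eq hint, hcent]
  have key1 : mtil μ 0 ξ ≤ lb * ξ := by
    have hb : ∀ u ∈ Ioc (0:ℝ) ξ, quantile μ u ≤ lb := by
      intro u hu
      refine quantile_le hu.1 ?_
      rw [← hξdef]; exact hu.2
    calc mtil μ 0 ξ ≤ ∫ _ in Ioc (0:ℝ) ξ, lb :=
          setIntegral_mono_on hglob.integrableOn
            ((integrableOn_const_iff).mpr (Or.inr measure_Ioc_lt_top)) measurableSet_Ioc hb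
    _ = ξ * lb := by
          rw [setIntegral_const]
          simp [Real.volume_Ioc, ENNReal.toReal_ofReal hξ0, hξ0]
    _ = lb * ξ := mul_comm _ _
  have mtilqq : mtil μ q q = 0 := by simp [mtil]
  have conj1 : mtil μ 0 ξ + mtil μ q q - lb * (ξ + q - q) ≤ 0 := by
    rw [mtilqq]
    have h1 : lb * (ξ + q - q) = lb * ξ := by ring
    linarith [key1]
  have hq_lt1 : q < 1 := by
    rcases lt_or_eq_of_le hq1 with h | h
    · exact h
    · exfalso
      rw [← h] at h27fail
      have e1 : mtil μ ξ q = G q - G ξ := hmtil ξ q hξq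
      have e2 : mtil μ 0 ξ = G ξ - G 0 := hmtil 0 ξ hξ0
      rw [← h] at hG1
      linarith [key1, h27fail, e1, e2, hG0, hG1]
  have conj3 : 0 < -(mtil μ ξ q) - (1 - q + ξ) * lb := by linarith [h27fail]
  set h : ℝ → ℝ := fun π => mtil μ 0 ξ + (G π - G q) - lb * (ξ + π - q) with hhdef
  have hcont : Continuous h := by
    apply Continuous.sub
    · exact continuous_const.add (hGcont.sub continuous_const)
    · exact continuous_const.mul
        (((continuous_const.add continuous_id).sub continuous_const))
  have h1val : h 1 = -(mtil μ ξ q) - (1 - q + ξ) * lb := by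
    rw [hhdef]
    simp only
    rw [hG1, hmtil ξ q hξq, hmtil 0 ξ hξ0, hG0]
    ring
  have hev : ∀ᶠ π in 𝓝[<] (1:ℝ),
      h π = mtil μ 0 ξ + mtil μ q π - lb * (ξ + π - q) := by
    filter_upwards [Ioo_mem_nhdsLT_of_mem
      (show (1:ℝ) ∈ Ioc q 1 from ⟨hq_lt1, le_refl 1⟩)] with π hπ
    rw [hhdef]
    simp only
    rw [hmtil q π hπ.1.le]
  have htend : Tendsto h (𝓝[<] (1:ℝ))
      (𝓝 (-(mtil μ ξ q) - (1 - q + ξ) * lb)) := by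
    rw [← h1val]
    exact (hcont.tendsto 1).mono_left nhdsWithin_le_nhds
  have conj2 : Tendsto (fun π => mtil μ 0 ξ + mtil μ q π - lb * (ξ + π - q))
      (𝓝[<] (1:ℝ)) (𝓝 (-(mtil μ ξ q) - (1 - q + ξ) * lb)) :=
    Filter.Tendsto.congr' hev htend
  refine ⟨conj1, conj2, conj3, ?_⟩
  have hhq : h q ≤ 0 := by
    have : h q = mtil μ 0 ξ - lb * ξ := by rw [hhdef]; simp only; ring
    linarith [key1]
  have h0mem : (0:ℝ) ∈ Icc (h q) (h 1) := ⟨hhq, by rw [h1val]; linarith [conj3]⟩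
  obtain ⟨π, hπmem, hπeq⟩ := intermediate_value_Icc hq_lt1.le hcont.continuousOn h0mem
  have hπlt : π < 1 := by
    rcases lt_or_eq_of_le hπmem.2 with hlt | heq
    · exact hlt
    · exfalso
      rw [heq, h1val] at hπeq
      linarith [conj3]
  refine ⟨π, ⟨hπmem.1, hπlt⟩, ?_⟩
  have e3 : mtil μ q π = G π - G q := hmtil q π hπmem.1
  have e4 : h π = mtil μ 0 ξ + (G π - G q) - lb * (ξ + π - q) := by rw [hhdef]
  rw [e4] at hπeq
  linarith [hπeq, e3]
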